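/- (Lemma 3 of the paper.) Let u_max > 0 and α ≥ 1 be real constants, e₁ = (1,0), e₂ = (0,1). Let r, ṙ, d, ḋ ∈ ℝ² with r ≠ 0 and d ≠ 0, and set r̂ = r/‖r‖, d̂ = d/‖d‖. Suppose there is no pair (x, y) with 1/α ≤ x ≤ 1 and 1/α ≤ y ≤ 1 satisfying both ‖ṙ‖ · (x · ⟪e₁, r̂⟫ + y · ⟪e₂, r̂⟫) ≥ ⟪ṙ, r̂⟫ and −‖ḋ‖ · (x · ⟪e₁, d̂⟫ + y · ⟪e₂, d̂⟫) ≥ −⟪ḋ, d̂⟫. Then there is no u ∈ ℝ² satisfying simultaneously: ‖u‖_∞ ≤ u_max, ⟪u, e₁⟫ ≤ −u_max/α, ⟪u, e₂⟫ ≤ −u_max/α, the swarming constraint (‖ṙ‖/u_max) · ⟪u, r̂⟫ + ⟪ṙ, r̂⟫ ≤ 0, and the predator-avoidance constraint −(‖ḋ‖/u_max) · ⟪u, d̂⟫ − ⟪ḋ, d̂⟫ ≤ 0. -/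

import Mathlib

open scoped RealInnerProductSpace

noncomputable def e1 : EuclideanSpace ℝ (Fin 2) := EuclideanSpace.single 0 1
noncomputable def e2 : EuclideanSpace ℝ (Fin 2) := EuclideanSpace.single 1 1

/-- Infinity norm on ℝ²: `‖u‖_∞ = max (|⟪u, e₁⟫|) (|⟪u, e₂⟫|)`. -/
noncomputable def infNorm (u : EuclideanSpace ℝ (Fin 2)) : ℝ :=
  max |⟪u, e1⟫| |⟪u, e2⟫|

lemma inner_decomp (u v : EuclideanSpace ℝ (Fin 2)) :
    ⟪u, v⟫ = ⟪u, e1⟫ * ⟪e1, v⟫ + ⟪u, e2⟫ * ⟪e2, v⟫ := by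
  simp [e1, e2, PiLp.inner_apply, Fin.sum_univ_two, EuclideanSpace.single_apply]; ring

/-- Lemma 3 of the paper (joint constraint incompatibility): if the reduced 2×2
linear inequality system has no solution in the box `[1/α, 1]²`, then no control
simultaneously satisfies the control bound, the two active-wall conditions, the
swarming constraint, and the predator-avoidance constraint. -/
theorem stmt_12 (umax α : ℝ) (humax : 0 < umax) (hα : 1 ≤ α)
    (r rdot d ddot : EuclideanSpace ℝ (Fin 2)) (hr : r ≠ 0) (hd : d ≠ 0)
    (hnosol : ¬ ∃ x y : ℝ, 1 / α ≤ x ∧ x ≤ 1 ∧ 1 / α ≤ y ∧ y ≤ 1 ∧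
      ‖rdot‖ * (x * ⟪e1, ‖r‖⁻¹ • r⟫ + y * ⟪e2, ‖r‖⁻¹ • r⟫) ≥ ⟪rdot, ‖r‖⁻¹ • r⟫ ∧
      -(‖ddot‖ * (x * ⟪e1, ‖d‖⁻¹ • d⟫ + y * ⟪e2, ‖d‖⁻¹ • d⟫))
        ≥ -⟪ddot, ‖d‖⁻¹ • d⟫) :
    ¬ ∃ u : EuclideanSpace ℝ (Fin 2),
      infNorm u ≤ umax ∧
      ⟪u, e1⟫ ≤ -(umax / α) ∧
      ⟪u, e2⟫ ≤ -(umax / α) ∧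
      (‖rdot‖ / umax) * ⟪u, ‖r‖⁻¹ • r⟫ + ⟪rdot, ‖r‖⁻¹ • r⟫ ≤ 0 ∧
      -((‖ddot‖ / umax) * ⟪u, ‖d‖⁻¹ • d⟫) - ⟪ddot, ‖d‖⁻¹ • d⟫ ≤ 0 := by
  rintro ⟨u, hbound, h1, h2, hsw, hpred⟩
  apply hnosol
  have hu0 : umax ≠ 0 := ne_of_gt humax
  have hα0 : (0:ℝ) < α := lt_of_lt_of_le one_pos hα
  have hb1 : |⟪u, e1⟫| ≤ umax := le_trans (le_max_left _ _) hbound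
  have hb2 : |⟪u, e2⟫| ≤ umax := le_trans (le_max_right _ _) hbound
  have hb1' := abs_le.mp hb1
  have hb2' := abs_le.mp hb2
  refine ⟨-⟪u, e1⟫ / umax, -⟪u, e2⟫ / umax, ?_, ?_, ?_, ?_, ?_, ?_⟩
  · rw [div_le_div_iff₀ hα0 humax]
    nlinarith [mul_le_mul_of_nonneg_right h1 hα0.le, div_mul_cancel₀ umax (ne_of_gt hα0)]
  · rw [div_le_one humax]; linarith [hb1'.1]
  · rw [div_le_div_iff₀ hα0 humax]
    nlinarith [mul_le_mul_of_nonneg_right h2 hα0.le, div_mul_cancel₀ umax (ne_of_gt hα0)]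
  · rw [div_le_one humax]; linarith [hb2'.1]
  · have hd1 := inner_decomp u (‖r‖⁻¹ • r)
    rw [ge_iff_le, ← sub_nonneg]
    have key : ‖rdot‖ * (-⟪u, e1⟫ / umax * ⟪e1, ‖r‖⁻¹ • r⟫ +
        -⟪u, e2⟫ / umax * ⟪e2, ‖r‖⁻¹ • r⟫) - ⟪rdot, ‖r‖⁻¹ • r⟫
        = -((‖rdot‖ / umax) * ⟪u, ‖r‖⁻¹ • r⟫ + ⟪rdot, ‖r‖⁻¹ • r⟫) := by
      rw [hd1]; field_simp; ring
    rw [key]; linarith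
  · have hd1 := inner_decomp u (‖d‖⁻¹ • d)
    rw [ge_iff_le, neg_le_neg_iff]
    have key : ‖ddot‖ * (-⟪u, e1⟫ / umax * ⟪e1, ‖d‖⁻¹ • d⟫ +
        -⟪u, e2⟫ / umax * ⟪e2, ‖d‖⁻¹ • d⟫)
        = -((‖ddot‖ / umax) * ⟪u, ‖d‖⁻¹ • d⟫) := by
      rw [hd1]; field_simp; ring
    rw [key]; linarith
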